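/- Element-wise Poincaré inequality: let T ⊆ 𝒩 be a nonempty subset whose induced subgraph is connected. Then there exists a constant C_po > 0 such that |v − q_T(v)·1|_{M,T} ≤ C_po |v|_{L,T} for all v : 𝒩 → ℝ, where q_T(v) = (M_T v, 1)/|1|_{M,T}² is the element average of v over T. -/

import Mathlib

open Finset

variable {n : ℕ} {N : Type*}

/-- The (edge-weighted) mass bilinear form `(M_S u, v)`. -/
noncomputable def Mform [Fintype N] (G : SimpleGraph N) [DecidableRel G.Adj]
    (pos : N → EuclideanSpace ℝ (Fin n)) (α : ℝ) (S : Finset N) (u v : N → ℝ) : ℝ :=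
  ∑ x ∈ S, (1 / 2 : ℝ) * ∑ y ∈ G.neighborFinset x,
    dist (pos x) (pos y) ^ ((2 : ℝ) - α) * (u x * v x)

/-- The (edge-weighted) stiffness bilinear form `(L_S u, v)`. -/
noncomputable def Lform [Fintype N] (G : SimpleGraph N) [DecidableRel G.Adj]
    (pos : N → EuclideanSpace ℝ (Fin n)) (α : ℝ) (S : Finset N) (u v : N → ℝ) : ℝ :=
  ∑ x ∈ S, (1 / 2 : ℝ) * ∑ y ∈ G.neighborFinset x,
    ((u x - u y) * (v x - v y)) / dist (pos x) (pos y) ^ α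

/-- `|v|_{M,S}`. -/
noncomputable def Mnorm [Fintype N] (G : SimpleGraph N) [DecidableRel G.Adj]
    (pos : N → EuclideanSpace ℝ (Fin n)) (α : ℝ) (S : Finset N) (v : N → ℝ) : ℝ :=
  Real.sqrt (Mform G pos α S v v)

/-- `|v|_{L,S}`. -/
noncomputable def Lnorm [Fintype N] (G : SimpleGraph N) [DecidableRel G.Adj]
    (pos : N → EuclideanSpace ℝ (Fin n)) (α : ℝ) (S : Finset N) (v : N → ℝ) : ℝ :=
  Real.sqrt (Lform G pos α S v v)

/-- The element average `q_T(v) = (M_T v, 1) / |1|_{M,T}^2`. -/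
noncomputable def avg [Fintype N] (G : SimpleGraph N) [DecidableRel G.Adj]
    (pos : N → EuclideanSpace ℝ (Fin n)) (α : ℝ) (T : Finset N) (v : N → ℝ) : ℝ :=
  Mform G pos α T v (fun _ => 1) / Mform G pos α T (fun _ => 1) (fun _ => 1)

/-- Euclidean inner product of functions on the node set. -/
noncomputable def ip [Fintype N] (u v : N → ℝ) : ℝ := ∑ x, u x * v x

/-- Length of a walk: the sum of Euclidean edge lengths. -/
noncomputable def wlen (G : SimpleGraph N) (pos : N → EuclideanSpace ℝ (Fin n))
    {x y : N} (w : G.Walk x y) : ℝ :=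
  (w.darts.map (fun d => dist (pos d.toProd.1) (pos d.toProd.2))).sum

/-- Graph distance from `x` to the boundary set `bnd`, along paths inside `T`. -/
noncomputable def distT (G : SimpleGraph N) (pos : N → EuclideanSpace ℝ (Fin n))
    (T bnd : Finset N) (x : N) : ℝ :=
  sInf {ℓ : ℝ | ∃ y ∈ bnd, ∃ w : G.Walk x y, (∀ z ∈ w.support, z ∈ T) ∧ ℓ = wlen G pos w}

/-- The non-normalized bubble function `b̃_T`. -/
noncomputable def btilde [DecidableEq N] (G : SimpleGraph N) (pos : N → EuclideanSpace ℝ (Fin n))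
    (T bnd : Finset N) : N → ℝ :=
  fun x => if x ∈ T then distT G pos T bnd x else 0

section aux
variable [Fintype N] [DecidableEq N] (G : SimpleGraph N) [DecidableRel G.Adj]
  (pos : N → EuclideanSpace ℝ (Fin n)) (α : ℝ)

noncomputable def cwt (x : N) : ℝ :=
  (1 / 2 : ℝ) * ∑ y ∈ G.neighborFinset x, dist (pos x) (pos y) ^ ((2 : ℝ) - α)

lemma cwt_nonneg (x : N) : 0 ≤ cwt G pos α x := by
  unfold cwt
  have : ∀ y ∈ G.neighborFinset x, (0:ℝ) ≤ dist (pos x) (pos y) ^ ((2:ℝ) - α) :=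
    fun y _ => Real.rpow_nonneg dist_nonneg _
  positivity

lemma Mform_diag (T : Finset N) (u v : N → ℝ) :
    Mform G pos α T u v = ∑ x ∈ T, cwt G pos α x * (u x * v x) := by
  unfold Mform cwt
  refine Finset.sum_congr rfl fun x _ => ?_
  rw [← Finset.sum_mul, ← mul_assoc]

/-- restricted (interior) stiffness form -/
noncomputable def Lin (T : Finset N) (v : N → ℝ) : ℝ :=
  ∑ x ∈ T, (1 / 2 : ℝ) * ∑ y ∈ G.neighborFinset x ∩ T,
    ((v x - v y) * (v x - v y)) / dist (pos x) (pos y) ^ α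

lemma Lin_nonneg (T : Finset N) (v : N → ℝ) : 0 ≤ Lin G pos α T v := by
  unfold Lin
  refine Finset.sum_nonneg fun x _ => mul_nonneg (by norm_num) ?_
  refine Finset.sum_nonneg fun y _ => div_nonneg (mul_self_nonneg _) ?_
  exact Real.rpow_nonneg dist_nonneg _

lemma Lin_le_Lform (T : Finset N) (v : N → ℝ) : Lin G pos α T v ≤ Lform G pos α T v v := by
  unfold Lin Lform
  refine Finset.sum_le_sum fun x _ => mul_le_mul_of_nonneg_left ?_ (by norm_num)
  refine Finset.sum_le_sum_of_subset_of_nonneg (Finset.inter_subset_left) fun y _ _ => ?_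
  exact div_nonneg (mul_self_nonneg _) (Real.rpow_nonneg dist_nonneg _)

lemma Lin_smul (T : Finset N) (c : ℝ) (v : N → ℝ) :
    Lin G pos α T (c • v) = c ^ 2 * Lin G pos α T v := by
  unfold Lin
  rw [Finset.mul_sum]
  refine Finset.sum_congr rfl fun x _ => ?_
  rw [Finset.mul_sum, Finset.mul_sum, Finset.mul_sum]
  refine Finset.sum_congr rfl fun y _ => ?_
  simp only [Pi.smul_apply, smul_eq_mul]
  ring

lemma Lin_congr (T : Finset N) (u v : N → ℝ) (h : ∀ x ∈ T, u x = v x) :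
    Lin G pos α T u = Lin G pos α T v := by
  unfold Lin
  refine Finset.sum_congr rfl fun x hx => ?_
  congr 1
  refine Finset.sum_congr rfl fun y hy => ?_
  rw [h x hx, h y (Finset.mem_of_mem_inter_right hy)]

lemma Lin_continuous (T : Finset N) : Continuous (fun v => Lin G pos α T v) := by
  unfold Lin
  refine continuous_finset_sum _ fun x _ => Continuous.mul continuous_const ?_
  exact continuous_finset_sum _ fun y _ =>
    (((continuous_apply x).sub (continuous_apply y)).mul
      ((continuous_apply x).sub (continuous_apply y))).div_const _

lemma Mform_one_continuous (T : Finset N) :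
    Continuous (fun v : N → ℝ => Mform G pos α T v (fun _ => 1)) := by
  simp only [Mform_diag]
  exact continuous_finset_sum _ fun x _ => continuous_const.mul ((continuous_apply x).mul continuous_const)

/-- If the restricted energy vanishes, `v` is constant on `T` (using induced connectivity). -/
lemma Lin_eq_zero_const (T : Finset N)
    (hdist : ∀ x y : N, G.Adj x y → 0 < dist (pos x) (pos y))
    (hTconn : (G.induce (T : Set N)).Connected) (v : N → ℝ)
    (hv : Lin G pos α T v = 0) : ∀ x ∈ T, ∀ y ∈ T, v x = v y := by
  have hterm : ∀ x ∈ T, ∀ y ∈ G.neighborFinset x ∩ T, v x = v y := by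
    have h0 : ∀ x ∈ T, (1 / 2 : ℝ) * ∑ y ∈ G.neighborFinset x ∩ T,
        ((v x - v y) * (v x - v y)) / dist (pos x) (pos y) ^ α = 0 := by
      have := (Finset.sum_eq_zero_iff_of_nonneg (fun x _ =>
        mul_nonneg (by norm_num : (0:ℝ) ≤ 1/2) (Finset.sum_nonneg fun y _ =>
          div_nonneg (mul_self_nonneg _) (Real.rpow_nonneg dist_nonneg _)))).mp hv
      exact this
    intro x hx y hy
    have hxy : G.Adj x y := by
      have := Finset.mem_of_mem_inter_left hy
      exact (SimpleGraph.mem_neighborFinset G x y).mp this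
    have hsum0 : ∑ y ∈ G.neighborFinset x ∩ T,
        ((v x - v y) * (v x - v y)) / dist (pos x) (pos y) ^ α = 0 := by
      have := h0 x hx; linarith
    have := (Finset.sum_eq_zero_iff_of_nonneg (fun y _ =>
      div_nonneg (mul_self_nonneg _) (Real.rpow_nonneg dist_nonneg _))).mp hsum0 y hy
    have hd : (0:ℝ) < dist (pos x) (pos y) ^ α := Real.rpow_pos_of_pos (hdist x y hxy) _
    have hnum : (v x - v y) * (v x - v y) = 0 := by
      rcases div_eq_zero_iff.mp this with h | h
      · exact h
      · exact absurd h (ne_of_gt hd)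
    nlinarith [hnum]
  -- now walk induction
  intro x hx y hy
  have step : ∀ a b : (T : Set N), (G.induce (T : Set N)).Adj a b → v a = v b := by
    intro a b hab
    have hGab : G.Adj (a : N) (b : N) := by simpa using hab
    exact hterm a (by simpa using a.2) b
      (Finset.mem_inter.mpr ⟨(SimpleGraph.mem_neighborFinset G _ _).mpr hGab, by simpa using b.2⟩)
  have key : ∀ (a b : (T : Set N)) (p : (G.induce (T : Set N)).Walk a b), v a = v b := by
    intro a b p
    induction p with
    | nil => rfl
    | cons h q ih => exact (step _ _ h).trans ih
  obtain ⟨p⟩ := hTconn.preconnected ⟨x, by simp [hx]⟩ ⟨y, by simp [hy]⟩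
  exact key _ _ p

lemma Mform_congr (T : Finset N) (u u' : N → ℝ) (h : ∀ x ∈ T, u x = u' x) :
    Mform G pos α T u u = Mform G pos α T u' u' := by
  rw [Mform_diag, Mform_diag]
  exact Finset.sum_congr rfl fun x hx => by rw [h x hx]

lemma Mform_smul_one (T : Finset N) (c : ℝ) (w : N → ℝ) :
    Mform G pos α T (c • w) (fun _ => 1) = c * Mform G pos α T w (fun _ => 1) := by
  rw [Mform_diag, Mform_diag, Finset.mul_sum]
  exact Finset.sum_congr rfl fun x hx => by simp [Pi.smul_apply, smul_eq_mul]; ring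

lemma Lin_sub_const (T : Finset N) (v : N → ℝ) (a : ℝ) :
    Lin G pos α T (fun x => v x - a) = Lin G pos α T v := by
  unfold Lin
  refine Finset.sum_congr rfl fun x _ => ?_
  congr 1
  refine Finset.sum_congr rfl fun y _ => ?_
  have : v x - a - (v y - a) = v x - v y := by ring
  rw [this]

lemma Mform_le_norm_sq (T : Finset N) (w : N → ℝ) :
    Mform G pos α T w w ≤ Mform G pos α T (fun _ => 1) (fun _ => 1) * ‖w‖ ^ 2 := by
  rw [Mform_diag, Mform_diag, Finset.sum_mul]
  refine Finset.sum_le_sum fun x _ => ?_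
  have h1 : |w x| ≤ ‖w‖ := by simpa using norm_le_pi_norm w x
  have h2 : w x * w x ≤ ‖w‖ ^ 2 := by
    calc w x * w x = |w x| ^ 2 := by rw [sq_abs]; ring
    _ ≤ ‖w‖ ^ 2 := by apply pow_le_pow_left₀ (abs_nonneg _) h1
  nlinarith [cwt_nonneg G pos α x]

end aux

theorem stmt3 [Fintype N] [DecidableEq N] (G : SimpleGraph N) [DecidableRel G.Adj]
    (pos : N → EuclideanSpace ℝ (Fin n)) (α : ℝ)
    (hα : 0 ≤ α ∧ α ≤ 2) (hpos : Function.Injective pos)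
    (hdist : ∀ x y : N, G.Adj x y → 0 < dist (pos x) (pos y))
    (hcard : 1 < Fintype.card N) (hconn : G.Connected)
    (T : Finset N) (hT : T.Nonempty)
    (hTconn : (G.induce (T : Set N)).Connected) :
    ∃ Cpo : ℝ, 0 < Cpo ∧ ∀ v : N → ℝ,
      Mnorm G pos α T (fun x => v x - avg G pos α T v) ≤ Cpo * Lnorm G pos α T v := by
  classical
  -- every node has a neighbor
  have hnbr : ∀ x : N, (G.neighborFinset x).Nonempty := by
    intro x
    obtain ⟨y, hy⟩ := Fintype.exists_ne_of_one_lt_card hcard x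
    obtain ⟨p⟩ := hconn.preconnected x y
    cases p with
    | nil => exact absurd rfl hy
    | cons h q => exact ⟨_, (SimpleGraph.mem_neighborFinset G _ _).mpr h⟩
  have hcpos : ∀ x : N, 0 < cwt G pos α x := by
    intro x
    obtain ⟨y, hy⟩ := hnbr x
    have hsum : 0 < ∑ z ∈ G.neighborFinset x, dist (pos x) (pos z) ^ ((2:ℝ) - α) :=
      Finset.sum_pos (fun z hz => Real.rpow_pos_of_pos
        (hdist x z ((SimpleGraph.mem_neighborFinset G x z).mp hz)) _) ⟨y, hy⟩
    unfold cwt; linarith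
  have hM11 : 0 < Mform G pos α T (fun _ => 1) (fun _ => 1) := by
    rw [Mform_diag]
    exact Finset.sum_pos (fun x _ => by simpa using hcpos x) hT
  -- the projected function
  set wv : (N → ℝ) → N → ℝ :=
    fun v x => if x ∈ T then v x - avg G pos α T v else 0 with hwv
  have f1 : ∀ v : N → ℝ,
      Mform G pos α T (fun x => v x - avg G pos α T v) (fun x => v x - avg G pos α T v)
        = Mform G pos α T (wv v) (wv v) := by
    intro v
    exact Mform_congr G pos α T _ _ fun x hx => by simp [hwv, if_pos hx]
  have f2 : ∀ v : N → ℝ, Mform G pos α T (wv v) (fun _ => 1) = 0 := by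
    intro v
    rw [Mform_diag]
    have hsplit : ∑ x ∈ T, cwt G pos α x * (wv v x * 1) =
        (∑ x ∈ T, cwt G pos α x * (v x * 1)) -
          avg G pos α T v * ∑ x ∈ T, cwt G pos α x * (1 * 1) := by
      rw [Finset.mul_sum, ← Finset.sum_sub_distrib]
      refine Finset.sum_congr rfl fun x hx => ?_
      simp only [hwv, if_pos hx]; ring
    rw [hsplit, ← Mform_diag, ← Mform_diag]
    unfold avg
    field_simp
    ring
  have f3 : ∀ v : N → ℝ, Lin G pos α T (wv v) = Lin G pos α T v := by
    intro v
    rw [Lin_congr G pos α T (wv v) (fun x => v x - avg G pos α T v)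
      (fun x hx => by simp [hwv, if_pos hx])]
    exact Lin_sub_const G pos α T v _
  set K : Set (N → ℝ) := {w | ‖w‖ = 1 ∧ (∀ x, x ∉ T → w x = 0) ∧
    Mform G pos α T w (fun _ => 1) = 0} with hKdef
  have hmemK : ∀ v : N → ℝ, wv v ≠ 0 → (‖wv v‖⁻¹ • wv v) ∈ K := by
    intro v hv
    have hnw : 0 < ‖wv v‖ := norm_pos_iff.mpr hv
    refine ⟨?_, ?_, ?_⟩
    · rw [norm_smul]
      simp [abs_of_nonneg (inv_nonneg.mpr hnw.le), inv_mul_cancel₀ hnw.ne']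
    · intro x hx
      simp [hwv, if_neg hx]
    · rw [Mform_smul_one, f2, mul_zero]
  -- the wrapper
  have final : ∀ C : ℝ, 0 < C →
      (∀ v : N → ℝ, Mform G pos α T (fun x => v x - avg G pos α T v)
        (fun x => v x - avg G pos α T v) ≤ C * Lform G pos α T v v) →
      ∃ Cpo : ℝ, 0 < Cpo ∧ ∀ v : N → ℝ,
        Mnorm G pos α T (fun x => v x - avg G pos α T v) ≤ Cpo * Lnorm G pos α T v := by
    intro C hC h
    refine ⟨Real.sqrt C, Real.sqrt_pos.mpr hC, fun v => ?_⟩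
    unfold Mnorm Lnorm
    calc Real.sqrt (Mform G pos α T (fun x => v x - avg G pos α T v)
          (fun x => v x - avg G pos α T v))
        ≤ Real.sqrt (C * Lform G pos α T v v) := Real.sqrt_le_sqrt (h v)
      _ = Real.sqrt C * Real.sqrt (Lform G pos α T v v) := Real.sqrt_mul hC.le _
  have hLf : ∀ v : N → ℝ, 0 ≤ Lform G pos α T v v :=
    fun v => le_trans (Lin_nonneg G pos α T v) (Lin_le_Lform G pos α T v)
  by_cases hKne : K.Nonempty
  · -- compactness
    have hKsub : K ⊆ Metric.closedBall 0 1 := fun w hw => by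
      simp [Metric.mem_closedBall, dist_zero_right, hw.1.le]
    have hKclosed : IsClosed K := by
      have h2 : IsClosed {w : N → ℝ | ∀ x, x ∉ T → w x = 0} := by
        have he : {w : N → ℝ | ∀ x, x ∉ T → w x = 0}
            = ⋂ x, ⋂ _ : x ∉ T, {w : N → ℝ | w x = 0} := by
          ext w; simp [Set.mem_iInter]
        rw [he]
        exact isClosed_iInter fun x => isClosed_iInter fun _ =>
          isClosed_eq (continuous_apply x) continuous_const
      have hKeq : K = {w : N → ℝ | ‖w‖ = 1} ∩ ({w : N → ℝ | ∀ x, x ∉ T → w x = 0} ∩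
          {w : N → ℝ | Mform G pos α T w (fun _ => 1) = 0}) := rfl
      rw [hKeq]
      exact (isClosed_eq continuous_norm continuous_const).inter
        (h2.inter (isClosed_eq (Mform_one_continuous G pos α T) continuous_const))
    have hKcomp : IsCompact K :=
      (isCompact_closedBall (0 : N → ℝ) 1).of_isClosed_subset hKclosed hKsub
    obtain ⟨w₀, hw₀K, hmin⟩ := hKcomp.exists_isMinOn hKne
      (Lin_continuous G pos α T).continuousOn
    have hm : 0 < Lin G pos α T w₀ := by
      rcases (Lin_nonneg G pos α T w₀).lt_or_eq with h | h
      · exact h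
      · exfalso
        have hconst := Lin_eq_zero_const G pos α T hdist hTconn w₀ h.symm
        obtain ⟨x₀, hx₀⟩ := hT
        have heq : Mform G pos α T w₀ (fun _ => 1)
            = w₀ x₀ * Mform G pos α T (fun _ => 1) (fun _ => 1) := by
          rw [Mform_diag, Mform_diag, Finset.mul_sum]
          refine Finset.sum_congr rfl fun x hx => ?_
          rw [hconst x hx x₀ hx₀]; ring
        have h0 : w₀ x₀ = 0 := by
          have hz := hw₀K.2.2
          rw [heq] at hz
          rcases mul_eq_zero.mp hz with h' | h'
          · exact h'
          · exact absurd h' hM11.ne'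
        have hwz : w₀ = 0 := by
          funext x
          by_cases hx : x ∈ T
          · simp [hconst x hx x₀ hx₀, h0]
          · simp [hw₀K.2.1 x hx]
        have h1 := hw₀K.1
        rw [hwz] at h1
        simp at h1
    set m := Lin G pos α T w₀ with hmdef
    refine final (Mform G pos α T (fun _ => 1) (fun _ => 1) / m) (div_pos hM11 hm) ?_
    intro v
    rw [f1 v]
    by_cases hw0 : wv v = 0
    · rw [hw0]
      have : Mform G pos α T (0 : N → ℝ) (0 : N → ℝ) = 0 := by
        rw [Mform_diag]; simp
      rw [this]
      exact mul_nonneg (div_pos hM11 hm).le (hLf v)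
    · have hnw : 0 < ‖wv v‖ := norm_pos_iff.mpr hw0
      have hmem := hmemK v hw0
      have hmle : Lin G pos α T w₀ ≤ ‖wv v‖⁻¹ ^ 2 * Lin G pos α T (wv v) :=
        le_trans (hmin hmem) (le_of_eq (Lin_smul G pos α T _ _))
      have hLwv : m * ‖wv v‖ ^ 2 ≤ Lin G pos α T (wv v) := by
        have h2 : (0:ℝ) < ‖wv v‖ ^ 2 := by positivity
        have := mul_le_mul_of_nonneg_right hmle h2.le
        calc m * ‖wv v‖ ^ 2 ≤ (‖wv v‖⁻¹ ^ 2 * Lin G pos α T (wv v)) * ‖wv v‖ ^ 2 := this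
          _ = Lin G pos α T (wv v) := by
              field_simp
      calc Mform G pos α T (wv v) (wv v)
          ≤ Mform G pos α T (fun _ => 1) (fun _ => 1) * ‖wv v‖ ^ 2 :=
            Mform_le_norm_sq G pos α T (wv v)
        _ = (Mform G pos α T (fun _ => 1) (fun _ => 1) / m) * (m * ‖wv v‖ ^ 2) := by
            field_simp
        _ ≤ (Mform G pos α T (fun _ => 1) (fun _ => 1) / m) * Lin G pos α T (wv v) :=
            mul_le_mul_of_nonneg_left hLwv (div_pos hM11 hm).le
        _ = (Mform G pos α T (fun _ => 1) (fun _ => 1) / m) * Lin G pos α T v := by rw [f3]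
        _ ≤ (Mform G pos α T (fun _ => 1) (fun _ => 1) / m) * Lform G pos α T v v :=
            mul_le_mul_of_nonneg_left (Lin_le_Lform G pos α T v) (div_pos hM11 hm).le
  · -- K empty: wv v is always 0
    refine final 1 one_pos ?_
    intro v
    have hw0 : wv v = 0 := by
      by_contra h
      exact hKne ⟨_, hmemK v h⟩
    rw [f1 v, hw0]
    have : Mform G pos α T (0 : N → ℝ) (0 : N → ℝ) = 0 := by
      rw [Mform_diag]; simp
    rw [this, one_mul]
    exact hLf v
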